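/- Let G be a finite connected simple graph with n vertices and m edges, w : D(G) → ℍ an arc weight with matrices K, L, J₀ as below. Then for every t ∈ ℂ with t² ≠ 1, det(I_{4m} − t·ψ(K·ᵀL − J₀)) = (1 − t²)^{2m} · det(I_{2n} − t·ψ(ᵀL)·(I_{4m} + t·ψ(J₀))⁻¹·ψ(K)), where I_{4m} + t·ψ(J₀) is invertible. -/

import Mathlib

noncomputable section

open Matrix

/-- Simplex part of a quaternion: `q = Sc q + j * Pc q`. -/
def Sc (q : Quaternion ℝ) : ℂ := ⟨q.re, q.imI⟩

/-- Perplex part of a quaternion: `q = Sc q + j * Pc q`. -/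
def Pc (q : Quaternion ℝ) : ℂ := ⟨q.imJ, -q.imK⟩

/-- The map ψ sending a quaternionic matrix `M = M^S + j·M^P` (symplectic decomposition)
to the complex block matrix `[[M^S, -conj(M^P)], [M^P, conj(M^S)]]`. -/
def psi {I J : Type*} (M : Matrix I J (Quaternion ℝ)) :
    Matrix (I ⊕ I) (J ⊕ J) ℂ :=
  Matrix.fromBlocks (M.map Sc) (-((M.map Pc).map (starRingEnd ℂ)))
    (M.map Pc) ((M.map Sc).map (starRingEnd ℂ))

variable {V : Type*}

/-- The quaternionic weighted matrix W: `W u v = w((u,v))` if `(u,v)` is an arc, else 0. -/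
def quatWeightMatrix [Fintype V] [DecidableEq V] (G : SimpleGraph V) [DecidableRel G.Adj]
    (w : G.Dart → Quaternion ℝ) : Matrix V V (Quaternion ℝ) := fun u v =>
  if h : G.Adj u v then w ⟨(u, v), h⟩ else 0

/-- The quaternionic weighted arc matrix B_w: `(B_w) e f = w(f)` if `t(e) = o(f)`, else 0. -/
def quatArcMatrix [Fintype V] [DecidableEq V] (G : SimpleGraph V) [DecidableRel G.Adj]
    (w : G.Dart → Quaternion ℝ) : Matrix G.Dart G.Dart (Quaternion ℝ) := fun e f =>
  if e.toProd.2 = f.toProd.1 then w f else 0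

/-- The quaternionic arc-inversion matrix J₀: `(J₀) e f = 1` if `f = e⁻¹`, else 0. -/
def quatArcInvMatrix [Fintype V] [DecidableEq V] (G : SimpleGraph V) [DecidableRel G.Adj] :
    Matrix G.Dart G.Dart (Quaternion ℝ) := fun e f =>
  if f = e.symm then 1 else 0

/-- The quaternionic weighted degree matrix D_w: diagonal with
`(D_w)_{uu} = Σ_{e : o(e) = u} w(e)`. -/
def quatDegMatrix [Fintype V] [DecidableEq V] (G : SimpleGraph V) [DecidableRel G.Adj]
    (w : G.Dart → Quaternion ℝ) : Matrix V V (Quaternion ℝ) :=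
  Matrix.diagonal fun u => ∑ e : G.Dart, if e.toProd.1 = u then w e else 0

/-- The 2m×n matrix K: `K e v = w(e)` if `o(e) = v`, else 0. -/
def quatKMatrix [Fintype V] [DecidableEq V] (G : SimpleGraph V) [DecidableRel G.Adj]
    (w : G.Dart → Quaternion ℝ) : Matrix G.Dart V (Quaternion ℝ) := fun e v =>
  if e.toProd.1 = v then w e else 0

/-- The 2m×n matrix L: `L e v = 1` if `t(e) = v`, else 0. -/
def quatLMatrix [Fintype V] [DecidableEq V] (G : SimpleGraph V) [DecidableRel G.Adj] :
    Matrix G.Dart V (Quaternion ℝ) := fun e v =>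
  if e.toProd.2 = v then 1 else 0

/- ---------- auxiliary lemmas ---------- -/

lemma Sc_mul' (p q : Quaternion ℝ) :
    Sc (p * q) = Sc p * Sc q - (starRingEnd ℂ) (Pc p) * Pc q := by
  simp only [Sc, Pc, Complex.ext_iff, Complex.mul_re, Complex.mul_im, Complex.sub_re,
    Complex.sub_im, Complex.conj_re, Complex.conj_im, Quaternion.re_mul, Quaternion.imI_mul]
  constructor <;> ring

lemma Pc_mul' (p q : Quaternion ℝ) :
    Pc (p * q) = (starRingEnd ℂ) (Sc p) * Pc q + Pc p * Sc q := by
  simp only [Sc, Pc, Complex.ext_iff, Complex.mul_re, Complex.mul_im, Complex.add_re,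
    Complex.add_im, Complex.conj_re, Complex.conj_im, Quaternion.imJ_mul, Quaternion.imK_mul]
  constructor <;> ring

/-- `Sc` as an additive monoid hom. -/
def ScHom : Quaternion ℝ →+ ℂ where
  toFun := Sc
  map_zero' := by simp [Sc, Complex.ext_iff]; exact ⟨rfl, rfl⟩
  map_add' p q := by simp [Sc, Complex.ext_iff]

/-- `Pc` as an additive monoid hom. -/
def PcHom : Quaternion ℝ →+ ℂ where
  toFun := Pc
  map_zero' := by simp [Pc, Complex.ext_iff]; exact ⟨rfl, rfl⟩
  map_add' p q := by
    simp only [Pc, Complex.ext_iff, Complex.add_re, Complex.add_im, Quaternion.imJ_add,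
      Quaternion.imK_add, true_and]
    ring

lemma Sc_sum {ι : Type*} (s : Finset ι) (f : ι → Quaternion ℝ) :
    Sc (∑ x ∈ s, f x) = ∑ x ∈ s, Sc (f x) := map_sum ScHom f s

lemma Pc_sum {ι : Type*} (s : Finset ι) (f : ι → Quaternion ℝ) :
    Pc (∑ x ∈ s, f x) = ∑ x ∈ s, Pc (f x) := map_sum PcHom f s

lemma Sc_sub' (p q : Quaternion ℝ) : Sc (p - q) = Sc p - Sc q := by
  simp [Sc, Complex.ext_iff]

lemma Pc_sub' (p q : Quaternion ℝ) : Pc (p - q) = Pc p - Pc q := by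
  simp only [Pc, Complex.ext_iff, Complex.sub_re, Complex.sub_im, Quaternion.imJ_sub,
    Quaternion.imK_sub, true_and]
  ring

lemma psi_sub {I J : Type*} (M N : Matrix I J (Quaternion ℝ)) :
    psi (M - N) = psi M - psi N := by
  ext (i | i) (j | j) <;>
    simp [psi, Sc_sub', Pc_sub', Matrix.sub_apply] <;> ring

lemma psi_mul {I J K : Type*} [Fintype J] (M : Matrix I J (Quaternion ℝ))
    (N : Matrix J K (Quaternion ℝ)) : psi (M * N) = psi M * psi N := by
  ext (i | i) (k | k) <;>
    simp only [psi, Matrix.fromBlocks_apply₁₁, Matrix.fromBlocks_apply₁₂,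
      Matrix.fromBlocks_apply₂₁, Matrix.fromBlocks_apply₂₂, Matrix.mul_apply,
      Matrix.map_apply, Matrix.add_apply, Matrix.neg_apply, Fintype.sum_sum_type,
      Sc_sum, Pc_sum, Sc_mul', Pc_mul', map_sub, map_add, _root_.map_mul, map_neg,
      map_sum, Complex.conj_conj, Finset.sum_sub_distrib, Finset.sum_add_distrib,
      Finset.sum_neg_distrib, neg_mul, mul_neg, neg_neg, neg_add] <;>
    abel

/-- for t ∈ ℂ with t² ≠ 1, the matrix I_{4m} + tψ(J₀) is invertible and
det(I_{4m} − tψ(K·ᵀL − J₀)) = (1−t²)^{2m}·det(I_{2n} − tψ(ᵀL)(I_{4m} + tψ(J₀))⁻¹ψ(K)). -/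
theorem quat_det_first_reduction [Fintype V] [DecidableEq V] (G : SimpleGraph V)
    [DecidableRel G.Adj] (hG : G.Connected) (m : ℕ) (hm : m = G.edgeFinset.card)
    (w : G.Dart → Quaternion ℝ) (t : ℂ) (ht : t ^ 2 ≠ 1) :
    IsUnit ((1 : Matrix (G.Dart ⊕ G.Dart) (G.Dart ⊕ G.Dart) ℂ) +
        t • psi (quatArcInvMatrix G)) ∧
    ((1 : Matrix (G.Dart ⊕ G.Dart) (G.Dart ⊕ G.Dart) ℂ) -
        t • psi (quatKMatrix G w * (quatLMatrix G)ᵀ - quatArcInvMatrix G)).det =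
      (1 - t ^ 2) ^ (2 * m) *
        ((1 : Matrix (V ⊕ V) (V ⊕ V) ℂ) -
          t • (psi ((quatLMatrix G)ᵀ) *
            ((1 : Matrix (G.Dart ⊕ G.Dart) (G.Dart ⊕ G.Dart) ℂ) +
              t • psi (quatArcInvMatrix G))⁻¹ * psi (quatKMatrix G w))).det := by
  classical
  -- the complex version of the arc-inversion matrix
  set A : Matrix G.Dart G.Dart ℂ := fun e f => if f = e.symm then 1 else 0 with hAdef
  have hpsiJ : psi (quatArcInvMatrix G) = fromBlocks A 0 0 A := by
    ext (e | e) (f | f) <;> by_cases h : f = e.symm <;>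
      simp [psi, quatArcInvMatrix, h, Sc, Pc, Complex.ext_iff, Quaternion.re_one,
        Quaternion.imI_one, Quaternion.imJ_one, Quaternion.imK_one, Quaternion.re_zero,
        Quaternion.imI_zero, Quaternion.imJ_zero, Quaternion.imK_zero] <;>
      simp [hAdef, h]
  have hAA : A * A = 1 := by
    ext e f
    simp only [Matrix.mul_apply, Matrix.one_apply]
    simp only [hAdef, ite_mul, one_mul, zero_mul]
    rw [Finset.sum_ite_eq' Finset.univ e.symm fun g => if f = g.symm then (1 : ℂ) else 0]
    simp [SimpleGraph.Dart.symm_symm, eq_comm]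
  -- a sign function flipping under dart reversal
  let nu : V → ℕ := fun v => (Fintype.equivFin V v : ℕ)
  let ε : G.Dart → ℂ := fun e => if nu e.toProd.1 < nu e.toProd.2 then 1 else -1
  have hεsq : ∀ e, ε e * ε e = 1 := by
    intro e; by_cases h : nu e.toProd.1 < nu e.toProd.2 <;> simp [ε, h]
  have hεsymm : ∀ e : G.Dart, ε e * ε e.symm = -1 := by
    intro e
    have hne : nu e.toProd.1 ≠ nu e.toProd.2 := fun h =>
      e.adj.ne ((Fintype.equivFin V).injective (Fin.val_injective h))
    rcases hne.lt_or_gt with h | h <;>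
      simp [ε, SimpleGraph.Dart.symm, h, h.not_gt, not_lt_of_gt h]
  set D : Matrix G.Dart G.Dart ℂ := Matrix.diagonal ε with hDdef
  have hDD : D * D = 1 := by
    rw [hDdef, Matrix.diagonal_mul_diagonal]
    rw [show (fun i => ε i * ε i) = fun _ => (1 : ℂ) from funext hεsq, Matrix.diagonal_one]
  have hD : D * ((1 : Matrix G.Dart G.Dart ℂ) + t • A) * D = 1 - t • A := by
    ext e f
    simp only [hDdef, Matrix.mul_diagonal, Matrix.diagonal_mul, Matrix.add_apply,
      Matrix.sub_apply, Matrix.smul_apply, Matrix.one_apply, smul_eq_mul]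
    simp only [hAdef]
    by_cases h1 : f = e.symm
    · have h2 : e ≠ f := by rw [h1]; exact (SimpleGraph.Dart.symm_ne e).symm
      subst h1
      simp only [eq_self_iff_true, if_true, if_neg h2]
      linear_combination t * hεsymm e
    · by_cases h2 : e = f
      · subst h2
        simp only [eq_self_iff_true, if_true, if_neg h1]
        linear_combination hεsq e
      · simp only [if_neg h1, if_neg h2]
        ring
  -- determinant computations
  have hcard : Fintype.card G.Dart = 2 * m := by
    rw [SimpleGraph.dart_card_eq_twice_card_edges, hm]
  have hdetDD : D.det * D.det = 1 := by rw [← Matrix.det_mul, hDD, Matrix.det_one]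
  have hflip : ((1 : Matrix G.Dart G.Dart ℂ) - t • A).det =
      ((1 : Matrix G.Dart G.Dart ℂ) + t • A).det := by
    rw [← hD, Matrix.det_mul, Matrix.det_mul]
    linear_combination ((1 : Matrix G.Dart G.Dart ℂ) + t • A).det * hdetDD
  have hprod : ((1 : Matrix G.Dart G.Dart ℂ) + t • A) *
      ((1 : Matrix G.Dart G.Dart ℂ) - t • A) = (1 - t ^ 2) • 1 := by
    rw [mul_sub, mul_one, Matrix.mul_smul, add_mul, one_mul, Matrix.smul_mul, hAA, smul_add,
      smul_smul]
    module
  have hdet2 : ((1 : Matrix G.Dart G.Dart ℂ) + t • A).det *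
      ((1 : Matrix G.Dart G.Dart ℂ) + t • A).det = (1 - t ^ 2) ^ (2 * m) := by
    calc ((1 : Matrix G.Dart G.Dart ℂ) + t • A).det *
        ((1 : Matrix G.Dart G.Dart ℂ) + t • A).det
        = ((1 : Matrix G.Dart G.Dart ℂ) + t • A).det *
          ((1 : Matrix G.Dart G.Dart ℂ) - t • A).det := by rw [hflip]
      _ = (((1 : Matrix G.Dart G.Dart ℂ) + t • A) *
          ((1 : Matrix G.Dart G.Dart ℂ) - t • A)).det := (Matrix.det_mul _ _).symm
      _ = ((1 - t ^ 2) • (1 : Matrix G.Dart G.Dart ℂ)).det := by rw [hprod]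
      _ = (1 - t ^ 2) ^ (2 * m) := by simp [Matrix.det_smul, hcard]
  have hdetU : ((1 : Matrix (G.Dart ⊕ G.Dart) (G.Dart ⊕ G.Dart) ℂ) +
      t • psi (quatArcInvMatrix G)).det = (1 - t ^ 2) ^ (2 * m) := by
    rw [hpsiJ, ← Matrix.fromBlocks_one, Matrix.fromBlocks_smul, Matrix.fromBlocks_add]
    simp only [smul_zero, add_zero, zero_add]
    rw [Matrix.det_fromBlocks_zero₂₁]
    exact hdet2
  have hne1 : (1 - t ^ 2 : ℂ) ≠ 0 := sub_ne_zero.mpr (Ne.symm ht)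
  have hUdet : IsUnit ((1 : Matrix (G.Dart ⊕ G.Dart) (G.Dart ⊕ G.Dart) ℂ) +
      t • psi (quatArcInvMatrix G)).det := by
    rw [hdetU]; exact isUnit_iff_ne_zero.mpr (pow_ne_zero _ hne1)
  set U : Matrix (G.Dart ⊕ G.Dart) (G.Dart ⊕ G.Dart) ℂ :=
    (1 : Matrix (G.Dart ⊕ G.Dart) (G.Dart ⊕ G.Dart) ℂ) + t • psi (quatArcInvMatrix G) with hUdef
  refine ⟨(Matrix.isUnit_iff_isUnit_det U).mpr hUdet, ?_⟩
  set PK := psi (quatKMatrix G w) with hPK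
  set PL := psi ((quatLMatrix G)ᵀ) with hPL
  have hsplit : (1 : Matrix (G.Dart ⊕ G.Dart) (G.Dart ⊕ G.Dart) ℂ) -
      t • psi (quatKMatrix G w * (quatLMatrix G)ᵀ - quatArcInvMatrix G) =
      U - t • (PK * PL) := by
    rw [psi_sub, psi_mul, hUdef, smul_sub]
    module
  have hfac : U - t • (PK * PL) = U * (1 - (U⁻¹ * (t • PK)) * PL) := by
    rw [mul_sub, mul_one, ← Matrix.mul_assoc, ← Matrix.mul_assoc,
      Matrix.mul_nonsing_inv U hUdet, Matrix.one_mul, Matrix.smul_mul]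
  rw [hsplit, hfac, Matrix.det_mul, hdetU, Matrix.det_one_sub_mul_comm]
  congr 2
  rw [Matrix.mul_smul, Matrix.mul_smul, ← Matrix.mul_assoc]
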